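/- For every real η > 0 there exists a constant C_η > 0 such that for every integer N ≥ 1 and every family (a_j)_{j ≥ -1} of nonnegative real numbers with Σ_{j ≥ -1} (2+j)^η a_j < ∞, one has Σ_{q ≥ -1} (2+q)^η Σ_{j ≥ -1, j < q/2 - N} 2^{-(1/2)(q/2 - j)} a_j ≤ C_η 2^{-N/2} N^η Σ_{j ≥ -1} (2+j)^η a_j. -/

import Mathlib

open scoped ENNReal NNReal

private noncomputable def lfH (k : ℕ) (δ : ℤ) : ℝ≥0∞ :=
  if 1 ≤ δ then ENNReal.ofReal ((1 + (δ:ℝ))^k * (2:ℝ) ^ (-(δ:ℝ)/4)) else 0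

private noncomputable def lfS (k : ℕ) : ℝ≥0∞ :=
  ∑' n : ℕ, ENNReal.ofReal ((2 + (n:ℝ))^k * (2:ℝ) ^ (-((n:ℝ)+1)/4))

private lemma lfsummable (k : ℕ) :
    Summable (fun n : ℕ => (2 + (n:ℝ))^k * (2:ℝ) ^ (-((n:ℝ)+1)/4)) := by
  set r : ℝ := (2:ℝ) ^ (-(1:ℝ)/4) with hr
  have hr0 : 0 < r := Real.rpow_pos_of_pos two_pos _
  have hr1 : r < 1 := Real.rpow_lt_one_of_one_lt_of_neg (by norm_num) (by norm_num)
  have hgeo : Summable (fun n : ℕ => (n:ℝ)^k * r^n) :=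
    summable_pow_mul_geometric_of_norm_lt_one k
      (by rw [Real.norm_eq_abs, abs_of_pos hr0]; exact hr1)
  have h2 : Summable (fun n : ℕ => ((n+2:ℕ):ℝ)^k * r^(n+2)) :=
    (summable_nat_add_iff 2).mpr hgeo
  refine (h2.mul_left r⁻¹).congr fun n => ?_
  have hpow : (2:ℝ) ^ (-((n:ℝ)+1)/4) = r ^ (n+1) := by
    rw [hr, ← Real.rpow_natCast ((2:ℝ) ^ (-(1:ℝ)/4)) (n+1),
      ← Real.rpow_mul (by norm_num : (0:ℝ) ≤ 2)]
    congr 1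
    push_cast
    ring
  rw [hpow]
  push_cast
  rw [pow_succ r (n+1)]
  have hrne : r ≠ 0 := ne_of_gt hr0
  have hrr : r⁻¹ * (((n:ℝ)+2)^k * (r^(n+1) * r)) = ((n:ℝ)+2)^k * r^(n+1) * (r⁻¹ * r) := by
    ring
  rw [hrr, inv_mul_cancel₀ hrne, mul_one]
  ring

private lemma lfS_ne_top (k : ℕ) : lfS k ≠ ⊤ := by
  rw [lfS, ← ENNReal.ofReal_tsum_of_nonneg (fun n => by positivity) (lfsummable k)]
  exact ENNReal.ofReal_ne_top

private lemma lfH_tsum (k : ℕ) : ∑' δ : ℤ, lfH k δ = lfS k := by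
  have hinj : Function.Injective (fun n : ℕ => (n:ℤ) + 1) := by
    intro a b h
    simp only at h
    omega
  have hsupp : Function.support (lfH k) ⊆ Set.range (fun n : ℕ => (n:ℤ) + 1) := by
    intro δ hδ
    have h1 : 1 ≤ δ := by
      by_contra h
      exact hδ (by simp [lfH, h])
    refine ⟨(δ - 1).toNat, ?_⟩
    simp only []
    omega
  rw [← Function.Injective.tsum_eq hinj hsupp, lfS]
  refine tsum_congr fun n => ?_
  have h1 : (1:ℤ) ≤ (n:ℤ) + 1 := by omega
  simp only [lfH, if_pos h1]
  push_cast
  rw [show (1:ℝ) + ((n:ℝ) + 1) = 2 + (n:ℝ) by ring]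

private noncomputable def lfF (η : ℝ) (N : ℕ) (a : ℤ → ℝ≥0) (q j : ℤ) : ℝ≥0∞ :=
  if -1 ≤ q ∧ -1 ≤ j ∧ (j:ℝ) < (q:ℝ)/2 - (N:ℝ) then
    (ENNReal.ofReal (2 + (q:ℝ))) ^ η *
      (ENNReal.ofReal ((2:ℝ) ^ (-(1/2 : ℝ) * ((q:ℝ)/2 - (j:ℝ)))) * (a j : ℝ≥0∞))
  else 0

theorem lowfreq_double_sum_estimate (η : ℝ) (hη : 0 < η) :
    ∃ C : ℝ≥0, 0 < C ∧ ∀ N : ℕ, 1 ≤ N → ∀ a : ℤ → ℝ≥0,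
      (∑' j : ℤ, if -1 ≤ j then (ENNReal.ofReal (2 + (j:ℝ))) ^ η * (a j : ℝ≥0∞) else 0) < ⊤ →
      (∑' q : ℤ, if -1 ≤ q then
          (ENNReal.ofReal (2 + (q:ℝ))) ^ η *
            ∑' j : ℤ, if -1 ≤ j ∧ (j:ℝ) < (q:ℝ)/2 - N then
                ENNReal.ofReal ((2:ℝ) ^ (-(1/2 : ℝ) * ((q:ℝ)/2 - (j:ℝ)))) * (a j : ℝ≥0∞)
              else 0
        else 0)
      ≤ (C : ℝ≥0∞) * ENNReal.ofReal ((2:ℝ) ^ (-(N:ℝ)/2)) * (N : ℝ≥0∞) ^ η *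
          ∑' j : ℤ, if -1 ≤ j then (ENNReal.ofReal (2 + (j:ℝ))) ^ η * (a j : ℝ≥0∞) else 0 := by
  classical
  set k : ℕ := ⌈η⌉₊ + 1 with hkdef
  have hηk : η ≤ (k : ℝ) := by
    have h1 := Nat.le_ceil η
    have h2 : ((⌈η⌉₊ : ℕ) : ℝ) + 1 = (k : ℝ) := by rw [hkdef]; push_cast; ring
    linarith
  set S := lfS k with hS
  set Ctop : ℝ≥0∞ := ENNReal.ofReal ((4:ℝ) ^ η) * S + 1 with hCdef
  have hCne : Ctop ≠ ⊤ := by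
    rw [hCdef]
    exact ENNReal.add_ne_top.mpr
      ⟨ENNReal.mul_ne_top ENNReal.ofReal_ne_top (by rw [hS]; exact lfS_ne_top k),
        ENNReal.one_ne_top⟩
  have hCge : ENNReal.ofReal ((4:ℝ) ^ η) * S ≤ Ctop := by rw [hCdef]; exact le_self_add
  have hC0 : Ctop ≠ 0 := by
    rw [hCdef]
    simp
  refine ⟨Ctop.toNNReal, ENNReal.toNNReal_pos hC0 hCne, ?_⟩
  intro N hN a _
  rw [ENNReal.coe_toNNReal hCne]
  have hNR : (1:ℝ) ≤ (N:ℝ) := by exact_mod_cast hN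
  set DN := ENNReal.ofReal ((2:ℝ) ^ (-(N:ℝ)/2)) with hDN
  set Nη := (N : ℝ≥0∞) ^ η with hNη
  set K := ∑' j : ℤ, if -1 ≤ j then (ENNReal.ofReal (2 + (j:ℝ))) ^ η * (a j : ℝ≥0∞) else 0
    with hK
  have hNηeq : ENNReal.ofReal ((N:ℝ) ^ η) = Nη := by
    rw [hNη, ← ENNReal.ofReal_rpow_of_pos (by linarith : (0:ℝ) < (N:ℝ)),
      ENNReal.ofReal_natCast]
  -- Step A
  have stepA : ∀ q : ℤ,
      (if -1 ≤ q then
          (ENNReal.ofReal (2 + (q:ℝ))) ^ η *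
            ∑' j : ℤ, if -1 ≤ j ∧ (j:ℝ) < (q:ℝ)/2 - N then
                ENNReal.ofReal ((2:ℝ) ^ (-(1/2 : ℝ) * ((q:ℝ)/2 - (j:ℝ)))) * (a j : ℝ≥0∞)
              else 0
        else 0) = ∑' j : ℤ, lfF η N a q j := by
    intro q
    by_cases hq : -1 ≤ q
    · rw [if_pos hq, ← ENNReal.tsum_mul_left]
      refine tsum_congr fun j => ?_
      simp only [lfF]
      by_cases hP : -1 ≤ j ∧ (j:ℝ) < (q:ℝ)/2 - (N:ℝ)
      · rw [if_pos hP, if_pos ⟨hq, hP⟩]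
      · rw [if_neg hP, if_neg (fun h => hP h.2), mul_zero]
    · rw [if_neg hq]
      exact ((tsum_congr fun j => by
        simp only [lfF]; rw [if_neg (fun h => hq h.1)]).trans tsum_zero).symm
  -- core per-j estimate
  have core : ∀ j : ℤ, (∑' q : ℤ, lfF η N a q j) ≤
      if -1 ≤ j then (Ctop * DN * Nη) * ((ENNReal.ofReal (2 + (j:ℝ))) ^ η * a j) else 0 := by
    intro j
    by_cases hj : -1 ≤ j
    · rw [if_pos hj]
      have hjR : (-1:ℝ) ≤ (j:ℝ) := by exact_mod_cast hj
      set q0 : ℤ := 2*j + 2*(N:ℤ) with hq0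
      set c : ℝ≥0∞ :=
        ENNReal.ofReal ((4:ℝ)^η * ((2:ℝ)^(-(N:ℝ)/2) * ((N:ℝ)^η * (2 + (j:ℝ))^η))) * a j
        with hc
      have hb : ∀ q : ℤ, lfF η N a q j ≤ c * lfH k (q - q0) := by
        intro q
        simp only [lfF]
        split_ifs with h
        · obtain ⟨hq, -, hlt⟩ := h
          have hqR : (-1:ℝ) ≤ (q:ℝ) := by exact_mod_cast hq
          have hδ : 1 ≤ q - q0 := by
            have h1 : ((2*j + 2*(N:ℤ) : ℤ):ℝ) < (q:ℝ) := by push_cast; linarith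
            have h2 : (2*j + 2*(N:ℤ) : ℤ) < q := by exact_mod_cast h1
            omega
          set d : ℝ := ((q - q0 : ℤ) : ℝ) with hd
          have hd1 : (1:ℝ) ≤ d := by rw [hd]; exact_mod_cast hδ
          have hqd : (q:ℝ) = 2*(j:ℝ) + 2*(N:ℝ) + d := by rw [hd, hq0]; push_cast; ring
          have hH : lfH k (q - q0) = ENNReal.ofReal ((1 + d)^k * (2:ℝ)^(-d/4)) := by
            simp only [lfH]
            rw [if_pos hδ]
          rw [hH, hc]
          rw [ENNReal.ofReal_rpow_of_pos (by linarith : (0:ℝ) < 2 + (q:ℝ))]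
          rw [← mul_assoc, ← ENNReal.ofReal_mul (Real.rpow_nonneg (by linarith) _)]
          have hA : (0:ℝ) ≤ 2 + (j:ℝ) := by linarith
          rw [mul_right_comm, ← ENNReal.ofReal_mul (mul_nonneg (by positivity)
            (mul_nonneg (by positivity) (mul_nonneg (by positivity) (Real.rpow_nonneg hA _))))]
          refine mul_le_mul_left (ENNReal.ofReal_le_ofReal ?_) _
          -- real inequality
          have hsplit : (2:ℝ)^(-(1/2:ℝ)*((q:ℝ)/2 - (j:ℝ)))
              = (2:ℝ)^(-(N:ℝ)/2) * (2:ℝ)^(-d/4) := by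
            rw [← Real.rpow_add (by norm_num : (0:ℝ) < 2)]
            congr 1
            rw [hqd]; ring
          have hbig : (2:ℝ) + (q:ℝ) ≤ 4 * (N:ℝ) * ((2 + (j:ℝ)) * (1 + d)) := by
            nlinarith [mul_nonneg (by linarith : (0:ℝ) ≤ (N:ℝ) - 1) (by linarith : (0:ℝ) ≤ 1 + (j:ℝ)),
              mul_nonneg (by linarith : (0:ℝ) ≤ (N:ℝ) - 1) (by linarith : (0:ℝ) ≤ d - 1),
              mul_nonneg (by linarith : (0:ℝ) ≤ 1 + (j:ℝ)) (by linarith : (0:ℝ) ≤ d - 1),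
              mul_nonneg (mul_nonneg (by linarith : (0:ℝ) ≤ (N:ℝ) - 1) (by linarith : (0:ℝ) ≤ 1 + (j:ℝ))) (by linarith : (0:ℝ) ≤ d - 1)]
          have h1 : ((2:ℝ) + q)^η ≤ (4 * (N:ℝ) * ((2 + (j:ℝ)) * (1 + d)))^η :=
            Real.rpow_le_rpow (by linarith) hbig hη.le
          have h2 : (4 * (N:ℝ) * ((2 + (j:ℝ)) * (1 + d)))^η
              = 4^η * (N:ℝ)^η * ((2 + (j:ℝ))^η * (1 + d)^η) := by
            rw [Real.mul_rpow (by positivity) (by positivity),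
              Real.mul_rpow (by norm_num) (by linarith),
              Real.mul_rpow hA (by linarith)]
          have h3 : ((1:ℝ) + d)^η ≤ (1 + d)^k := by
            rw [← Real.rpow_natCast (1 + d) k]
            exact Real.rpow_le_rpow_of_exponent_le (by linarith) hηk
          calc (2 + (q:ℝ))^η * (2:ℝ)^(-(1/2:ℝ)*((q:ℝ)/2 - (j:ℝ)))
              = (2 + (q:ℝ))^η * ((2:ℝ)^(-(N:ℝ)/2) * (2:ℝ)^(-d/4)) := by rw [hsplit]
            _ ≤ (4^η * (N:ℝ)^η * ((2 + (j:ℝ))^η * (1 + d)^k))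
                * ((2:ℝ)^(-(N:ℝ)/2) * (2:ℝ)^(-d/4)) := by
                refine mul_le_mul_of_nonneg_right (h1.trans ?_) (by positivity)
                rw [h2]
                exact mul_le_mul_of_nonneg_left
                  (mul_le_mul_of_nonneg_left h3 (by positivity)) (by positivity)
            _ = 4^η * ((2:ℝ)^(-(N:ℝ)/2) * ((N:ℝ)^η * (2 + (j:ℝ))^η))
                * ((1 + d)^k * (2:ℝ)^(-d/4)) := by ring
        · exact zero_le
      have hshift : ∑' q : ℤ, lfH k (q - q0) = S := by
        have h := (Equiv.subRight q0).tsum_eq (lfH k)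
        simp only [Equiv.subRight_apply] at h
        rw [h, hS, lfH_tsum]
      calc (∑' q : ℤ, lfF η N a q j) ≤ ∑' q : ℤ, c * lfH k (q - q0) :=
            ENNReal.tsum_le_tsum hb
        _ = c * ∑' q : ℤ, lfH k (q - q0) := ENNReal.tsum_mul_left
        _ = c * S := by rw [hshift]
        _ ≤ (Ctop * DN * Nη) * ((ENNReal.ofReal (2 + (j:ℝ))) ^ η * a j) := by
            have hPj : ENNReal.ofReal ((2 + (j:ℝ))^η) = (ENNReal.ofReal (2 + (j:ℝ))) ^ η :=
              (ENNReal.ofReal_rpow_of_pos (by linarith)).symm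
            have expand : c * S = (ENNReal.ofReal ((4:ℝ)^η) * S)
                * (DN * (Nη * ((ENNReal.ofReal (2 + (j:ℝ))) ^ η * a j))) := by
              rw [hc, ENNReal.ofReal_mul (by positivity), ENNReal.ofReal_mul (by positivity),
                ENNReal.ofReal_mul (by positivity), hNηeq, hPj, ← hDN]
              ring
            rw [expand]
            calc (ENNReal.ofReal ((4:ℝ)^η) * S)
                * (DN * (Nη * ((ENNReal.ofReal (2 + (j:ℝ))) ^ η * a j)))
                ≤ Ctop * (DN * (Nη * ((ENNReal.ofReal (2 + (j:ℝ))) ^ η * a j))) :=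
                  mul_le_mul_left hCge _
              _ = (Ctop * DN * Nη) * ((ENNReal.ofReal (2 + (j:ℝ))) ^ η * a j) := by ring
    · rw [if_neg hj]
      exact le_of_eq ((tsum_congr fun q => by
        simp only [lfF]; rw [if_neg (fun h => hj h.2.1)]).trans tsum_zero)
  calc (∑' q : ℤ, if -1 ≤ q then
          (ENNReal.ofReal (2 + (q:ℝ))) ^ η *
            ∑' j : ℤ, if -1 ≤ j ∧ (j:ℝ) < (q:ℝ)/2 - N then
                ENNReal.ofReal ((2:ℝ) ^ (-(1/2 : ℝ) * ((q:ℝ)/2 - (j:ℝ)))) * (a j : ℝ≥0∞)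
              else 0
        else 0)
      = ∑' q : ℤ, ∑' j : ℤ, lfF η N a q j := tsum_congr stepA
    _ = ∑' j : ℤ, ∑' q : ℤ, lfF η N a q j := ENNReal.tsum_comm
    _ ≤ ∑' j : ℤ, (if -1 ≤ j then
          (Ctop * DN * Nη) * ((ENNReal.ofReal (2 + (j:ℝ))) ^ η * a j) else 0) :=
        ENNReal.tsum_le_tsum core
    _ = (Ctop * DN * Nη) * K := by
        rw [hK, ← ENNReal.tsum_mul_left]
        refine tsum_congr fun j => ?_
        by_cases hj : -1 ≤ j
        · rw [if_pos hj, if_pos hj]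
        · rw [if_neg hj, if_neg hj, mul_zero]
    _ = Ctop * DN * Nη * K := rfl
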